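/- Let T be a tournament on ℕ, let F be a finite set transitive for T, and let I be a minimal interval of F that is infinite. Then for any finite set J ⊆ I such that F ∪ J is transitive for T, there is a partition J = P ∪ Q (P ∩ Q = ∅) such that both F ∪ P and F ∪ Q are extendable and each of F ∪ P and F ∪ Q has a minimal interval that is contained in I and is infinite. -/

import Mathlib

/-- `T` is a tournament on ℕ: irreflexive, and exactly one of `T x y`, `T y x`
holds for distinct `x`, `y`. -/
def IsTournament (T : ℕ → ℕ → Prop) : Prop :=
  (∀ x, ¬ T x x) ∧ ∀ x y, x ≠ y → (T x y ↔ ¬ T y x)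

/-- `S` is transitive for the tournament `T`. -/
def TransitiveFor (T : ℕ → ℕ → Prop) (S : Set ℕ) : Prop :=
  ∀ x ∈ S, ∀ y ∈ S, ∀ z ∈ S, T x y → T y z → T x z

/-- A set is extendable if it is contained in some infinite transitive set. -/
def Extendable (T : ℕ → ℕ → Prop) (F : Set ℕ) : Prop :=
  ∃ S : Set ℕ, S.Infinite ∧ TransitiveFor T S ∧ F ⊆ S

/-- `I` is a minimal interval of the finite transitive set `F`: for some
`≤_F`-downward-closed `C ⊆ F`, `I` is the set of `x ∉ F` such that `F ∪ {x}` is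
transitive and the elements of `F` that `T`-precede `x` are exactly those of `C`. -/
def MinimalInterval (T : ℕ → ℕ → Prop) (F : Finset ℕ) (I : Set ℕ) : Prop :=
  ∃ C : Finset ℕ, C ⊆ F ∧ (∀ a ∈ C, ∀ b ∈ F, T b a → b ∈ C) ∧
    I = {x | x ∉ F ∧ TransitiveFor T (insert x ↑F) ∧ ∀ f ∈ F, (T f x ↔ f ∈ C)}

lemma tourn_asym (T : ℕ → ℕ → Prop) (hT : IsTournament T) :
    ∀ x y, T x y → T y x → False := by
  intro x y h1 h2
  by_cases e : x = y
  · exact hT.1 x (e ▸ h1)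
  · exact ((hT.2 x y e).mp h1) h2

lemma tourn_total (T : ℕ → ℕ → Prop) (hT : IsTournament T) :
    ∀ x y, x ≠ y → ¬ T x y → T y x := by
  intro x y hxy h
  exact (hT.2 y x (fun e => hxy e.symm)).mpr h

/-- Infinite Ramsey for tournaments: every infinite set contains an infinite
transitive subset. -/
lemma tourn_ramsey (T : ℕ → ℕ → Prop) (hT : IsTournament T)
    (X : Set ℕ) (hX : X.Infinite) :
    ∃ S, S ⊆ X ∧ S.Infinite ∧ TransitiveFor T S := by
  classical
  have asym := tourn_asym T hT
  have step : ∀ Y : Set ℕ, Y.Infinite → ∃ a, a ∈ Y ∧ ∃ b : Bool, ∃ Z : Set ℕ,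
      Z.Infinite ∧ Z ⊆ Y ∧ a ∉ Z ∧ ∀ z ∈ Z, (if b then T a z else T z a) := by
    intro Y hY
    obtain ⟨a, ha⟩ := hY.nonempty
    have h1 : (Y \ {a}).Infinite := hY.diff (Set.finite_singleton a)
    have hsub : (Y \ {a}) ⊆ {z | z ∈ Y \ {a} ∧ T a z} ∪ {z | z ∈ Y \ {a} ∧ T z a} := by
      intro z hz
      by_cases h : T a z
      · exact Or.inl ⟨hz, h⟩
      · exact Or.inr ⟨hz, tourn_total T hT a z (fun e => hz.2 e.symm) h⟩
    rcases Set.infinite_union.mp (h1.mono hsub) with h2 | h2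
    · refine ⟨a, ha, true, _, h2, fun z hz => hz.1.1, fun hz => hz.1.2 rfl, ?_⟩
      intro z hz; simpa using hz.2
    · refine ⟨a, ha, false, _, h2, fun z hz => hz.1.1, fun hz => hz.1.2 rfl, ?_⟩
      intro z hz; simpa using hz.2
  choose el hel bc Zf hZinf hZsub hZa hZrel using step
  let f : ℕ → {Y : Set ℕ // Y.Infinite} :=
    fun n => Nat.rec ⟨X, hX⟩ (fun _ p => ⟨Zf p.1 p.2, hZinf p.1 p.2⟩) n
  set a : ℕ → ℕ := fun n => el (f n).1 (f n).2 with ha_def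
  set c : ℕ → Bool := fun n => bc (f n).1 (f n).2 with hc_def
  have hmem : ∀ n, a n ∈ (f n).1 := fun n => hel _ _
  have hsubs : ∀ n, (f (n+1)).1 ⊆ (f n).1 := fun n => hZsub _ _
  have hnotmem : ∀ n, a n ∉ (f (n+1)).1 := fun n => hZa _ _
  have hrel : ∀ n, ∀ z ∈ (f (n+1)).1, (if c n then T (a n) z else T z (a n)) :=
    fun n => hZrel _ _
  have hmono : ∀ m n, m ≤ n → (f n).1 ⊆ (f m).1 := by
    intro m n h
    induction h with
    | refl => exact fun _ h => h
    | step _ ih => exact fun x hx => ih (hsubs _ hx)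
  have ha_lt : ∀ m n, m < n → a n ∈ (f (m+1)).1 := fun m n h => hmono (m+1) n h (hmem n)
  have hinj : ∀ m n, m < n → a m ≠ a n := fun m n h e => hnotmem m (e ▸ ha_lt m n h)
  obtain ⟨b, N, hNinf, hNc⟩ : ∃ (b : Bool) (N : Set ℕ), N.Infinite ∧ ∀ n ∈ N, c n = b := by
    have hcov : (Set.univ : Set ℕ) ⊆ {n | c n = true} ∪ {n | c n = false} := by
      intro n _
      cases hc : c n
      · exact Or.inr hc
      · exact Or.inl hc
    rcases Set.infinite_union.mp (Set.infinite_univ.mono hcov) with h | h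
    · exact ⟨true, _, h, fun n hn => hn⟩
    · exact ⟨false, _, h, fun n hn => hn⟩
  have hinjOn : Set.InjOn a N := by
    intro m _ n _ e
    rcases lt_trichotomy m n with h | h | h
    · exact absurd e (hinj m n h)
    · exact h
    · exact absurd e.symm (hinj n m h)
  refine ⟨a '' N, ?_, hNinf.image hinjOn, ?_⟩
  · rintro _ ⟨n, _, rfl⟩
    exact hmono 0 n (Nat.zero_le n) (hmem n)
  · have key : ∀ m ∈ N, ∀ n ∈ N, m < n → (if b then T (a m) (a n) else T (a n) (a m)) := by
      intro m hm n hn h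
      have := hrel m (a n) (ha_lt m n h)
      rwa [hNc m hm] at this
    rintro _ ⟨i, hi, rfl⟩ _ ⟨j, hj, rfl⟩ _ ⟨k, hk, rfl⟩ hij hjk
    cases b with
    | true =>
      have lt_of : ∀ m ∈ N, ∀ n ∈ N, T (a m) (a n) → m < n := by
        intro m hm n hn h
        rcases lt_trichotomy m n with h' | h' | h'
        · exact h'
        · exact absurd h (h' ▸ fun hh => hT.1 _ hh)
        · have hk2 := key n hn m hm h'
          simp only [if_true] at hk2
          exact absurd hk2 (fun hh => asym _ _ h hh)
      have h1 := lt_of i hi j hj hij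
      have h2 := lt_of j hj k hk hjk
      have := key i hi k hk (h1.trans h2)
      simpa using this
    | false =>
      have lt_of : ∀ m ∈ N, ∀ n ∈ N, T (a m) (a n) → n < m := by
        intro m hm n hn h
        rcases lt_trichotomy n m with h' | h' | h'
        · exact h'
        · exact absurd h (h' ▸ fun hh => hT.1 _ hh)
        · have hk2 := key m hm n hn h'
          simp only [Bool.false_eq_true, if_false, ↓reduceIte] at hk2
          exact absurd hk2 (fun hh => asym _ _ h hh)
      have h1 := lt_of i hi j hj hij
      have h2 := lt_of j hj k hk hjk
      have := key k hk i hi (h2.trans h1)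
      simpa using this

/-- Partition lemma: if `I` is an infinite minimal interval of a finite transitive
set `F` and `J ⊆ I` is finite with `F ∪ J` transitive, then `J` can be partitioned
into `P` and `Q` so that `F ∪ P` and `F ∪ Q` are both extendable and both have an
infinite minimal interval contained in `I`. -/
theorem partition_lemma (T : ℕ → ℕ → Prop) (hT : IsTournament T)
    (F : Finset ℕ) (hF : TransitiveFor T ↑F)
    (I : Set ℕ) (hI : MinimalInterval T F I) (hIinf : I.Infinite)
    (J : Finset ℕ) (hJI : ↑J ⊆ I) (hFJ : TransitiveFor T ↑(F ∪ J)) :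
    ∃ P Q : Finset ℕ, P ∪ Q = J ∧ Disjoint P Q ∧
      Extendable T ↑(F ∪ P) ∧ Extendable T ↑(F ∪ Q) ∧
      (∃ I' : Set ℕ, MinimalInterval T (F ∪ P) I' ∧ I' ⊆ I ∧ I'.Infinite) ∧
      (∃ I' : Set ℕ, MinimalInterval T (F ∪ Q) I' ∧ I' ⊆ I ∧ I'.Infinite) := by
  classical
  obtain ⟨C, hCF, hCdown, hIdef⟩ := hI
  have asym := tourn_asym T hT
  have total := tourn_total T hT
  have hImem : ∀ x ∈ I, x ∉ F ∧ TransitiveFor T (insert x (↑F : Set ℕ)) ∧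
      ∀ f ∈ F, (T f x ↔ f ∈ C) := by
    intro x hx; rw [hIdef] at hx; exact hx
  have subTrans : ∀ (A B : Set ℕ), A ⊆ B → TransitiveFor T B → TransitiveFor T A :=
    fun A B hAB hB x hx y hy z hz => hB x (hAB hx) y (hAB hy) z (hAB hz)
  have unionTrans : ∀ A B : Set ℕ, TransitiveFor T A → TransitiveFor T B →
      (∀ a ∈ A, ∀ b ∈ B, T a b) → TransitiveFor T (A ∪ B) := by
    intro A B hA hB hab x hx y hy z hz hxy hyz
    rcases hx with hx | hx <;> rcases hy with hy | hy <;> rcases hz with hz | hz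
    · exact hA x hx y hy z hz hxy hyz
    · exact hab x hx z hz
    · exact absurd hyz (fun h => asym y z h (hab z hz y hy))
    · exact hab x hx z hz
    · exact absurd hxy (fun h => asym x y h (hab y hy x hx))
    · exact absurd hxy (fun h => asym x y h (hab y hy x hx))
    · exact absurd hyz (fun h => asym y z h (hab z hz y hy))
    · exact hB x hx y hy z hz hxy hyz
  have keyTrans : ∀ S : Set ℕ, S ⊆ I → TransitiveFor T S →
      TransitiveFor T ((↑F : Set ℕ) ∪ S) := by
    intro S hSI hS x hx y hy z hz hxy hyz
    rcases hx with hx | hx <;> rcases hy with hy | hy <;> rcases hz with hz | hz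
    · exact hF x hx y hy z hz hxy hyz
    · exact (hImem z (hSI hz)).2.1 x (Or.inr hx) y (Or.inr hy) z (Or.inl rfl) hxy hyz
    · exact (hImem y (hSI hy)).2.1 x (Or.inr hx) y (Or.inl rfl) z (Or.inr hz) hxy hyz
    · exact ((hImem z (hSI hz)).2.2 x hx).mpr (((hImem y (hSI hy)).2.2 x hx).mp hxy)
    · exact (hImem x (hSI hx)).2.1 x (Or.inl rfl) y (Or.inr hy) z (Or.inr hz) hxy hyz
    · exact absurd (((hImem z (hSI hz)).2.2 y hy).mp hyz)
        (fun hc => asym x y hxy (((hImem x (hSI hx)).2.2 y hy).mpr hc))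
    · have hznC : z ∉ C := fun hc => asym y z hyz (((hImem y (hSI hy)).2.2 z hz).mpr hc)
      have hnzx : ¬ T z x := fun h => hznC (((hImem x (hSI hx)).2.2 z hz).mp h)
      exact total z x (fun e => (hImem x (hSI hx)).1 (e ▸ hz)) hnzx
    · exact hS x hx y hy z hz hxy hyz
  set pat : ℕ → Finset ℕ := fun x => J.filter (fun j => T j x) with hpat
  have hXinf : (I \ ↑J).Infinite := hIinf.diff (J.finite_toSet)
  obtain ⟨D, hDJ, hYinf⟩ : ∃ D, D ⊆ J ∧ {x | x ∈ I \ ↑J ∧ pat x = D}.Infinite := by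
    by_contra h
    push_neg at h
    have hfin : (⋃ D ∈ (↑J.powerset : Set (Finset ℕ)),
        {x | x ∈ I \ ↑J ∧ pat x = D}).Finite :=
      Set.Finite.biUnion J.powerset.finite_toSet
        (fun D hD => h D (Finset.mem_powerset.mp hD))
    refine hXinf (hfin.subset ?_)
    intro x hx
    exact Set.mem_biUnion
      (Finset.mem_coe.mpr (Finset.mem_powerset.mpr (Finset.filter_subset _ _))) ⟨hx, rfl⟩
  obtain ⟨S, hSY, hSinf, hStrans⟩ := tourn_ramsey T hT _ hYinf
  have hSI : S ⊆ I := fun x hx => (hSY hx).1.1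
  have hSnJ : ∀ x ∈ S, x ∉ J := fun x hx => (hSY hx).1.2
  have hbeat : ∀ x ∈ S, ∀ j ∈ J, (T j x ↔ j ∈ D) := by
    intro x hx j hj
    rw [← (hSY hx).2, hpat]
    simp [Finset.mem_filter, hj]
  have hPI : (↑D : Set ℕ) ⊆ I := fun p hp => hJI (hDJ hp)
  have hQI : (↑(J \ D) : Set ℕ) ⊆ I := fun q hq => hJI (Finset.mem_coe.mpr (Finset.mem_sdiff.mp hq).1)
  have hSIsub : S ⊆ I := hSI
  have hPtrans : TransitiveFor T (↑D : Set ℕ) :=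
    subTrans _ _ (by intro x hx; simp only [Finset.coe_union, Set.mem_union]
                     exact Or.inr (Finset.mem_coe.mpr (hDJ hx))) hFJ
  have hQtrans : TransitiveFor T (↑(J \ D) : Set ℕ) :=
    subTrans _ _ (by intro x hx; simp only [Finset.coe_union, Set.mem_union]
                     exact Or.inr (Finset.mem_coe.mpr (Finset.mem_sdiff.mp hx).1)) hFJ
  have hPS : ∀ p ∈ (↑D : Set ℕ), ∀ s ∈ S, T p s :=
    fun p hp s hs => (hbeat s hs p (hDJ hp)).mpr hp
  have hSQ : ∀ s ∈ S, ∀ q ∈ (↑(J \ D) : Set ℕ), T s q := by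
    intro s hs q hq
    obtain ⟨hqJ, hqD⟩ := Finset.mem_sdiff.mp hq
    have hnqs : ¬ T q s := fun h => hqD ((hbeat s hs q hqJ).mp h)
    exact total q s (fun e => hSnJ s hs (e ▸ hqJ)) hnqs
  have hPStrans : TransitiveFor T ((↑D : Set ℕ) ∪ S) := unionTrans _ _ hPtrans hStrans hPS
  have hSQtrans : TransitiveFor T (S ∪ (↑(J \ D) : Set ℕ)) :=
    unionTrans _ _ hStrans hQtrans hSQ
  have hPSsubI : ((↑D : Set ℕ) ∪ S) ⊆ I := Set.union_subset hPI hSI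
  have hSQsubI : (S ∪ (↑(J \ D) : Set ℕ)) ⊆ I := Set.union_subset hSI hQI
  refine ⟨D, J \ D, Finset.union_sdiff_of_subset hDJ, Finset.disjoint_sdiff, ?_, ?_, ?_, ?_⟩
  · -- Extendable F ∪ D
    refine ⟨(↑F : Set ℕ) ∪ ((↑D : Set ℕ) ∪ S),
      hSinf.mono (fun x hx => Or.inr (Or.inr hx)), keyTrans _ hPSsubI hPStrans, ?_⟩
    rw [Finset.coe_union]
    exact Set.union_subset_union_right _ (Set.subset_union_left)
  · -- Extendable F ∪ (J \ D)
    refine ⟨(↑F : Set ℕ) ∪ (S ∪ (↑(J \ D) : Set ℕ)),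
      hSinf.mono (fun x hx => Or.inr (Or.inl hx)), keyTrans _ hSQsubI hSQtrans, ?_⟩
    rw [Finset.coe_union]
    exact Set.union_subset_union_right _ (Set.subset_union_right)
  · -- minimal interval for F ∪ D
    refine ⟨{x | x ∉ F ∪ D ∧ TransitiveFor T (insert x ↑(F ∪ D)) ∧
        ∀ f ∈ F ∪ D, (T f x ↔ f ∈ C ∪ D)},
      ⟨C ∪ D, Finset.union_subset_union hCF (Finset.Subset.refl D), ?_, rfl⟩, ?_, ?_⟩
    · -- down-closed
      intro p hp b hb hbp
      rcases Finset.mem_union.mp hp with hpC | hpD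
      · rcases Finset.mem_union.mp hb with hbF | hbD
        · exact Finset.mem_union_left _ (hCdown p hpC b hbF hbp)
        · exact absurd hbp (fun h => asym b p h
            (((hImem b (hPI hbD)).2.2 p (hCF hpC)).mpr hpC))
      · rcases Finset.mem_union.mp hb with hbF | hbD
        · exact Finset.mem_union_left _
            (((hImem p (hPI hpD)).2.2 b hbF).mp hbp)
        · exact Finset.mem_union_right _ hbD
    · -- I' ⊆ I
      intro x hx
      obtain ⟨hx1, hx2, hx3⟩ := hx
      rw [hIdef]
      refine ⟨fun h => hx1 (Finset.mem_union_left _ h), ?_, ?_⟩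
      · refine subTrans _ _ (Set.insert_subset_insert ?_) hx2
        rw [Finset.coe_union]; exact Set.subset_union_left
      · intro f hf
        have h := hx3 f (Finset.mem_union_left _ hf)
        constructor
        · intro htf
          rcases Finset.mem_union.mp (h.mp htf) with hc | hd
          · exact hc
          · exact absurd hf (hImem f (hPI hd)).1
        · exact fun hc => h.mpr (Finset.mem_union_left _ hc)
    · -- infinite
      refine hSinf.mono ?_
      intro x hx
      refine ⟨?_, ?_, ?_⟩
      · intro h
        rcases Finset.mem_union.mp h with hxF | hxD
        · exact (hImem x (hSI hx)).1 hxF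
        · exact hSnJ x hx (hDJ hxD)
      · have he : (insert x ↑(F ∪ D) : Set ℕ) = (↑F : Set ℕ) ∪ insert x ↑D := by
          rw [Finset.coe_union, Set.union_insert]
        rw [he]
        refine keyTrans _ ?_ ?_
        · exact Set.insert_subset (hSI hx) hPI
        · refine subTrans _ ((↑D : Set ℕ) ∪ S) ?_ hPStrans
          intro y hy
          rcases Set.mem_insert_iff.mp hy with rfl | hyD
          · exact Or.inr hx
          · exact Or.inl hyD
      · intro f hf
        rcases Finset.mem_union.mp hf with hfF | hfD
        · have h := (hImem x (hSI hx)).2.2 f hfF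
          constructor
          · exact fun htf => Finset.mem_union_left _ (h.mp htf)
          · intro hc
            rcases Finset.mem_union.mp hc with hc | hd
            · exact h.mpr hc
            · exact absurd hfF (hImem f (hPI hd)).1
        · exact iff_of_true (hPS f hfD x hx) (Finset.mem_union_right _ hfD)
  · -- minimal interval for F ∪ (J \ D)
    refine ⟨{x | x ∉ F ∪ (J \ D) ∧ TransitiveFor T (insert x ↑(F ∪ (J \ D))) ∧
        ∀ f ∈ F ∪ (J \ D), (T f x ↔ f ∈ C)},
      ⟨C, fun c hc => Finset.mem_union_left _ (hCF hc), ?_, rfl⟩, ?_, ?_⟩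
    · -- down-closed
      intro p hp b hb hbp
      rcases Finset.mem_union.mp hb with hbF | hbQ
      · exact hCdown p hp b hbF hbp
      · exact absurd hbp (fun h => asym b p h
          (((hImem b (hQI hbQ)).2.2 p (hCF hp)).mpr hp))
    · -- I' ⊆ I
      intro x hx
      obtain ⟨hx1, hx2, hx3⟩ := hx
      rw [hIdef]
      refine ⟨fun h => hx1 (Finset.mem_union_left _ h), ?_, ?_⟩
      · refine subTrans _ _ (Set.insert_subset_insert ?_) hx2
        rw [Finset.coe_union]; exact Set.subset_union_left
      · exact fun f hf => hx3 f (Finset.mem_union_left _ hf)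
    · -- infinite
      refine hSinf.mono ?_
      intro x hx
      refine ⟨?_, ?_, ?_⟩
      · intro h
        rcases Finset.mem_union.mp h with hxF | hxQ
        · exact (hImem x (hSI hx)).1 hxF
        · exact hSnJ x hx (Finset.mem_sdiff.mp hxQ).1
      · have he : (insert x ↑(F ∪ (J \ D)) : Set ℕ) = (↑F : Set ℕ) ∪ insert x ↑(J \ D) := by
          rw [Finset.coe_union, Set.union_insert]
        rw [he]
        refine keyTrans _ ?_ ?_
        · exact Set.insert_subset (hSI hx) hQI
        · refine subTrans _ (S ∪ (↑(J \ D) : Set ℕ)) ?_ hSQtrans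
          intro y hy
          rcases Set.mem_insert_iff.mp hy with rfl | hyQ
          · exact Or.inl hx
          · exact Or.inr hyQ
      · intro f hf
        rcases Finset.mem_union.mp hf with hfF | hfQ
        · exact (hImem x (hSI hx)).2.2 f hfF
        · refine iff_of_false ?_ ?_
          · obtain ⟨hfJ, hfD⟩ := Finset.mem_sdiff.mp hfQ
            exact fun h => hfD ((hbeat x hx f hfJ).mp h)
          · exact fun hc => (hImem f (hQI hfQ)).1 (hCF hc)
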